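/- arXiv:1501.04001 — 3 statements merged into one kernel-verified Lean document; each statement's English description precedes it below -/
import Mathlib

section
/- Let x and y be sequences of length m over a linearly ordered alphabet Σ, let ρ_x be the rank function of x and r = ρ_x⁻¹. Then x ≈ y if and only if both of the following hold: (1) y[r(i)] ≤ y[r(i+1)] for all 0 ≤ i < m−1, and (2) for all 0 ≤ i < m−1, x[r(i)] = x[r(i+1)] if and only if y[r(i)] = y[r(i+1)]. -/
variable {α : Type*} [LinearOrder α]

/-- β_x(i,j) = 1 if x[i] ≥ x[j], 0 otherwise. -/
def beta {m : ℕ} (x : Fin m → α) (i j : Fin m) : ℕ :=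
  if x j ≤ x i then 1 else 0

/-- The rank function ρ_x. -/
def rankFn {m : ℕ} (x : Fin m → α) (i : Fin m) : ℕ :=
  (Finset.univ.filter fun j => x j < x i ∨ (x j = x i ∧ j < i)).card

/-- Order isomorphism of two sequences of the same length. -/
def OrderIsom {m : ℕ} (x y : Fin m → α) : Prop :=
  ∀ i j : Fin m, x i ≤ x j ↔ y i ≤ y j

/-- The q-neighborhood-ranking value χ^q_x[i]. -/
def chi {m : ℕ} (x : Fin m → α) (q i : ℕ) (h : i + q < m) : ℕ :=
  ∑ j : Fin q, beta x ⟨i, by omega⟩ ⟨i + (j.val + 1), by have := j.isLt; omega⟩ *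
    2 ^ (q - (j.val + 1))

/-- The q-neighborhood-ordering value φ^q_x[i]. -/
def phi {m : ℕ} (x : Fin m → α) (q i : ℕ) (h : i + q < m) : ℕ :=
  ∑ k : Fin q, chi x (k.val + 1) (i + q - (k.val + 1)) (by have := k.isLt; omega) *
    2 ^ ((k.val + 1) * k.val / 2)

lemma rank_lt_of_prec {m : ℕ} (x : Fin m → α) {i j : Fin m}
    (h : x i < x j ∨ (x i = x j ∧ i < j)) : rankFn x i < rankFn x j := by
  have hik : ∀ k : Fin m, (x k < x i ∨ (x k = x i ∧ k < i)) →
      (x k < x j ∨ (x k = x j ∧ k < j)) := by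
    rintro k (hk | ⟨hk, hk'⟩) <;> rcases h with h | ⟨h, h'⟩
    · exact Or.inl (hk.trans h)
    · exact Or.inl (h ▸ hk)
    · exact Or.inl (hk ▸ h)
    · exact Or.inr ⟨hk.trans h, hk'.trans h'⟩
  have hii : i ∉ (Finset.univ.filter fun k => x k < x i ∨ (x k = x i ∧ k < i)) := by
    simp
  have hsub : insert i (Finset.univ.filter fun k => x k < x i ∨ (x k = x i ∧ k < i))
      ⊆ Finset.univ.filter fun k => x k < x j ∨ (x k = x j ∧ k < j) := by
    intro k hk
    simp only [Finset.mem_insert, Finset.mem_filter, Finset.mem_univ, true_and] at *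
    rcases hk with rfl | hk
    · exact h
    · exact hik k hk
  have := Finset.card_le_card hsub
  rw [Finset.card_insert_of_notMem hii] at this
  unfold rankFn
  omega

lemma prec_of_rank_lt {m : ℕ} (x : Fin m → α) {i j : Fin m}
    (h : rankFn x i < rankFn x j) : x i < x j ∨ (x i = x j ∧ i < j) := by
  by_contra hc
  push_neg at hc
  obtain ⟨h1, h2⟩ := hc
  have hij : i ≠ j := by rintro rfl; omega
  have hprec : x j < x i ∨ (x j = x i ∧ j < i) := by
    rcases lt_or_eq_of_le h1 with ht | ht
    · exact Or.inl ht
    · have hle := h2 ht.symm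
      rcases lt_or_eq_of_le hle with hl | hl
      · exact Or.inr ⟨ht, hl⟩
      · exact absurd hl.symm hij
  have := rank_lt_of_prec x hprec
  omega

/-- `x ≈ y` iff `y` is nondecreasing along the inverse rank permutation `r` of `x`,
and consecutive equalities along `r` agree between `x` and `y`. -/
theorem orderIsom_iff_rank_and_eq_conditions {m : ℕ} (x y : Fin m → α)
    (r : Fin m → Fin m) (hr : ∀ i : Fin m, rankFn x (r i) = i.val) :
    OrderIsom x y ↔
      ((∀ i : ℕ, ∀ h : i + 1 < m, y (r ⟨i, by omega⟩) ≤ y (r ⟨i + 1, h⟩)) ∧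
       (∀ i : ℕ, ∀ h : i + 1 < m,
          (x (r ⟨i, by omega⟩) = x (r ⟨i + 1, h⟩) ↔
           y (r ⟨i, by omega⟩) = y (r ⟨i + 1, h⟩)))) := by
  have hinj : Function.Injective r := by
    intro a b hab
    have : rankFn x (r a) = rankFn x (r b) := by rw [hab]
    rw [hr a, hr b] at this
    exact Fin.ext this
  have hsurj : Function.Surjective r := Finite.surjective_of_injective hinj
  have hprec : ∀ a b : Fin m, a < b →
      x (r a) < x (r b) ∨ (x (r a) = x (r b) ∧ r a < r b) := by
    intro a b hab
    apply prec_of_rank_lt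
    rw [hr a, hr b]
    exact hab
  have monoX : ∀ a b : Fin m, a ≤ b → x (r a) ≤ x (r b) := by
    intro a b hab
    rcases lt_or_eq_of_le hab with h | h
    · rcases hprec a b h with h' | ⟨h', _⟩
      · exact h'.le
      · exact h'.le
    · rw [h]
  constructor
  · intro hiso
    refine ⟨fun i h => ?_, fun i h => ?_⟩
    · exact (hiso _ _).mp (monoX ⟨i, by omega⟩ ⟨i + 1, h⟩ (by simp [Fin.le_def]))
    · constructor
      · intro he
        exact le_antisymm ((hiso _ _).mp he.le) ((hiso _ _).mp he.ge)
      · intro he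
        exact le_antisymm ((hiso _ _).mpr he.le) ((hiso _ _).mpr he.ge)
  · rintro ⟨h1, h2⟩
    have monoYd : ∀ d : ℕ, ∀ a : ℕ, ∀ hd : a + d < m,
        y (r ⟨a, by omega⟩) ≤ y (r ⟨a + d, hd⟩) := by
      intro d
      induction d with
      | zero => intro a hd; exact le_refl _
      | succ n ih =>
        intro a hd
        exact (ih a (by omega)).trans (h1 (a + n) hd)
    have monoY : ∀ a b : Fin m, a ≤ b → y (r a) ≤ y (r b) := by
      intro a b hab
      have hb : b = ⟨a.val + (b.val - a.val), by have := b.isLt; omega⟩ :=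
        Fin.ext (by simp; omega)
      rw [hb]
      exact monoYd (b.val - a.val) a.val (by have := b.isLt; omega)
    have chainEqd : ∀ d : ℕ, ∀ a : ℕ, ∀ hd : a + d < m,
        (x (r ⟨a, by omega⟩) = x (r ⟨a + d, hd⟩) ↔
         y (r ⟨a, by omega⟩) = y (r ⟨a + d, hd⟩)) := by
      intro d
      induction d with
      | zero => intro a hd; simp
      | succ n ih =>
        intro a hd
        have hn : a + n < m := by omega
        have hx1 : x (r ⟨a, by omega⟩) ≤ x (r ⟨a + n, hn⟩) :=
          monoX _ _ (by simp [Fin.le_def])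
        have hx2 : x (r ⟨a + n, hn⟩) ≤ x (r ⟨a + n + 1, hd⟩) :=
          monoX _ _ (by simp [Fin.le_def])
        have hy1 : y (r ⟨a, by omega⟩) ≤ y (r ⟨a + n, hn⟩) := monoYd n a hn
        have hy2 : y (r ⟨a + n, hn⟩) ≤ y (r ⟨a + n + 1, hd⟩) := h1 (a + n) hd
        have hcons := h2 (a + n) hd
        constructor
        · intro hxe
          have e1 : x (r ⟨a, by omega⟩) = x (r ⟨a + n, hn⟩) :=
            le_antisymm hx1 (hxe ▸ hx2)
          have e2 : x (r ⟨a + n, hn⟩) = x (r ⟨a + n + 1, hd⟩) :=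
            le_antisymm hx2 (e1 ▸ hxe.symm.le)
          exact ((ih a hn).mp e1).trans (hcons.mp e2)
        · intro hye
          have f1 : y (r ⟨a, by omega⟩) = y (r ⟨a + n, hn⟩) :=
            le_antisymm hy1 (hye ▸ hy2)
          have f2 : y (r ⟨a + n, hn⟩) = y (r ⟨a + n + 1, hd⟩) :=
            le_antisymm hy2 (f1 ▸ hye.symm.le)
          exact ((ih a hn).mpr f1).trans (hcons.mpr f2)
    have chainEq : ∀ a b : Fin m, a ≤ b → (x (r a) = x (r b) ↔ y (r a) = y (r b)) := by
      intro a b hab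
      have hb : b = ⟨a.val + (b.val - a.val), by have := b.isLt; omega⟩ :=
        Fin.ext (by simp; omega)
      rw [hb]
      exact chainEqd (b.val - a.val) a.val (by have := b.isLt; omega)
    have key : ∀ a b : Fin m, (x (r a) ≤ x (r b) ↔ y (r a) ≤ y (r b)) := by
      intro a b
      rcases le_or_gt a b with hab | hab
      · simp [monoX a b hab, monoY a b hab]
      · constructor
        · intro hx
          have hxe : x (r b) = x (r a) := le_antisymm (monoX b a hab.le) hx
          exact ((chainEq b a hab.le).mp hxe).ge
        · intro hy
          have hye : y (r b) = y (r a) := le_antisymm (monoY b a hab.le) hy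
          exact ((chainEq b a hab.le).mpr hye).ge
    intro i j
    obtain ⟨a, rfl⟩ := hsurj i
    obtain ⟨b, rfl⟩ := hsurj j
    exact key a b
end

section
/- (Corollary 1, NR filtering) Let x be a sequence of length m and y a sequence of length n over a linearly ordered alphabet Σ, let q be an integer with 0 < q < m, and let j be an index with j + m ≤ n. If x ≈ y[j…j+m−1], then χ^q_x[i] = χ^q_y[j+i] for all 0 ≤ i < m − q. -/
variable {α : Type*} [LinearOrder α]

/-- Corollary 1 (NR filtering): if `x ≈ y[j…j+m−1]` then `χ^q_x[i] = χ^q_y[j+i]`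
for all `0 ≤ i < m − q`. -/
theorem chi_filter {m n : ℕ} (x : Fin m → α) (y : Fin n → α) (q : ℕ)
    (hq : 0 < q) (hqm : q < m) (j : ℕ) (hj : j + m ≤ n)
    (h : OrderIsom x (fun l : Fin m => y ⟨j + l.val, by have := l.isLt; omega⟩)) :
    ∀ i : ℕ, ∀ hi : i + q < m, chi x q i hi = chi y q (j + i) (by omega) := by
  intro i hi
  unfold chi
  apply Finset.sum_congr rfl
  intro k _
  congr 1
  unfold beta
  have hk := k.isLt
  have := h ⟨i + (k.val + 1), by omega⟩ ⟨i, by omega⟩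
  simp only at this
  have h2 : (⟨j + (i + (k.val + 1)), by omega⟩ : Fin n) = ⟨j + i + (k.val + 1), by omega⟩ := by
    simp only [Fin.mk.injEq]; omega
  rw [h2] at this
  simp [this]
end

section
/- Let x and y be sequences over a linearly ordered alphabet Σ, let q ≥ 1, and let i, i' be indices such that the q-NO values φ^q_x[i] and φ^q_y[i'] are defined (i.e. i + q < |x| and i' + q < |y|). Then φ^q_x[i] = φ^q_y[i'] if and only if β_x(i+a, i+b) = β_y(i'+a, i'+b) for all 0 ≤ a < b ≤ q; that is, the q-NO value uniquely encodes all pairwise comparisons within the q-neighborhood ⟨x[i], x[i+1], …, x[i+q]⟩. -/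
variable {α : Type*} [LinearOrder α]

open Finset

lemma beta_le_one {m : ℕ} (x : Fin m → α) (i j : Fin m) : beta x i j ≤ 1 := by
  unfold beta; split <;> omega

lemma beta_congr' {m : ℕ} (x : Fin m → α) (p1 p2 p1' p2' : ℕ)
    (h1 : p1 < m) (h2 : p2 < m) (h1' : p1' < m) (h2' : p2' < m)
    (e1 : p1 = p1') (e2 : p2 = p2') :
    beta x ⟨p1, h1⟩ ⟨p2, h2⟩ = beta x ⟨p1', h1'⟩ ⟨p2', h2'⟩ := by
  subst e1; subst e2; rfl

-- mixed radix: sum bound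
lemma sum_lt_prod (B f : ℕ → ℕ) (n : ℕ) (hf : ∀ k < n, f k < B k) :
    ∑ k ∈ range n, f k * ∏ j ∈ range k, B j < ∏ j ∈ range n, B j := by
  induction n with
  | zero => simp
  | succ n ih =>
    rw [sum_range_succ, prod_range_succ]
    have h1 := ih (fun k hk => hf k (by omega))
    have hfn := hf n (by omega)
    have hpos : 0 < ∏ j ∈ range n, B j := by
      apply Finset.prod_pos
      intro j hj
      have := mem_range.mp hj
      exact lt_of_le_of_lt (Nat.zero_le _) (hf j (by omega))
    nlinarith

-- mixed radix digit uniqueness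
lemma digits_eq (B f g : ℕ → ℕ) (n : ℕ) (hf : ∀ k < n, f k < B k) (hg : ∀ k < n, g k < B k)
    (h : ∑ k ∈ range n, f k * ∏ j ∈ range k, B j = ∑ k ∈ range n, g k * ∏ j ∈ range k, B j) :
    ∀ k < n, f k = g k := by
  induction n with
  | zero => intro k hk; omega
  | succ n ih =>
    rw [sum_range_succ, sum_range_succ] at h
    have hS := sum_lt_prod B f n (fun k hk => hf k (by omega))
    have hT := sum_lt_prod B g n (fun k hk => hg k (by omega))
    have hW : 0 < ∏ j ∈ range n, B j := lt_of_le_of_lt (Nat.zero_le _) hS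
    have hfg : f n = g n := by
      have e1 : (∑ k ∈ range n, f k * ∏ j ∈ range k, B j + f n * ∏ j ∈ range n, B j)
          / ∏ j ∈ range n, B j = f n := by
        rw [Nat.mul_comm (f n), Nat.add_mul_div_left _ _ hW, Nat.div_eq_of_lt hS]
        omega
      have e2 : (∑ k ∈ range n, g k * ∏ j ∈ range k, B j + g n * ∏ j ∈ range n, B j)
          / ∏ j ∈ range n, B j = g n := by
        rw [Nat.mul_comm (g n), Nat.add_mul_div_left _ _ hW, Nat.div_eq_of_lt hT]
        omega
      rw [← e1, ← e2, h]
    have hsum : ∑ k ∈ range n, f k * ∏ j ∈ range k, B j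
        = ∑ k ∈ range n, g k * ∏ j ∈ range k, B j := by
      rw [hfg] at h
      exact Nat.add_right_cancel h
    intro k hk
    rcases Nat.lt_succ_iff_lt_or_eq.mp hk with hk' | rfl
    · exact ih (fun k hk => hf k (by omega)) (fun k hk => hg k (by omega)) hsum k hk'
    · exact hfg

-- binary digit of chi
def dig {m : ℕ} (x : Fin m → α) (i q : ℕ) (h : i + q < m) (t : ℕ) : ℕ :=
  beta x ⟨i, by omega⟩ ⟨i + (q - t), by omega⟩

lemma chi_repr {m : ℕ} (x : Fin m → α) (q i : ℕ) (h : i + q < m) :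
    chi x q i h = ∑ t ∈ range q, dig x i q h t * 2 ^ t := by
  rw [← Fin.sum_univ_eq_sum_range (fun t => dig x i q h t * 2 ^ t) q]
  unfold chi
  refine Fintype.sum_bijective Fin.rev Fin.rev_bijective _ _ fun j => ?_
  have hj := j.isLt
  have hv : (Fin.rev j).val = q - (j.val + 1) := Fin.val_rev j
  simp only [hv]
  unfold dig
  refine congrArg₂ (· * ·) ?_ rfl
  exact beta_congr' x i (i + (j.1+1)) i (i + (q - (q - (j.1+1)))) (by omega) (by omega)
    (by omega) (by omega) rfl (by omega)

lemma chi_lt {m : ℕ} (x : Fin m → α) (q i : ℕ) (h : i + q < m) :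
    chi x q i h < 2 ^ q := by
  rw [chi_repr]
  have := sum_lt_prod (fun _ => 2) (dig x i q h) q
    (fun k hk => lt_of_le_of_lt (beta_le_one _ _ _) (by norm_num))
  simpa [Finset.prod_const, Finset.card_range] using this

-- digit of phi
def Fdig {m : ℕ} (x : Fin m → α) (q i : ℕ) (h : i + q < m) (k : ℕ) : ℕ :=
  if hk : k < q then chi x (k+1) (i + q - (k+1)) (by omega) else 0

lemma Fdig_lt {m : ℕ} (x : Fin m → α) (q i : ℕ) (h : i + q < m) (k : ℕ) :
    Fdig x q i h k < 2 ^ (k+1) := by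
  unfold Fdig
  split
  · exact chi_lt _ _ _ _
  · positivity

lemma pow_tri (k : ℕ) : ∏ j ∈ range k, (2:ℕ) ^ (j+1) = 2 ^ ((k+1) * k / 2) := by
  rw [Finset.prod_pow_eq_pow_sum]
  congr 1
  induction k with
  | zero => simp
  | succ k ih =>
    rw [sum_range_succ, ih]
    have e : (k+1+1)*(k+1) = (k+1)*k + 2*(k+1) := by ring
    rw [e, Nat.add_mul_div_left _ _ (by norm_num : (0:ℕ) < 2)]

lemma phi_repr {m : ℕ} (x : Fin m → α) (q i : ℕ) (h : i + q < m) :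
    phi x q i h = ∑ k ∈ range q, Fdig x q i h k * ∏ j ∈ range k, 2 ^ (j+1) := by
  refine Eq.trans ?_ (Fin.sum_univ_eq_sum_range
    (fun k => Fdig x q i h k * ∏ j ∈ range k, 2 ^ (j+1)) q)
  unfold phi
  refine Finset.sum_congr rfl fun k _ => ?_
  rw [pow_tri, Fdig, dif_pos k.isLt]

/-- The q-NO value uniquely encodes all pairwise comparisons within the
q-neighborhood: two NO values agree iff all corresponding `β` comparisons
within the neighborhoods agree. -/
theorem phi_eq_iff_beta_eq {m n : ℕ} (x : Fin m → α) (y : Fin n → α) (q : ℕ)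
    (hq : 1 ≤ q) (i i' : ℕ) (hi : i + q < m) (hi' : i' + q < n) :
    phi x q i hi = phi y q i' hi' ↔
      ∀ a b : ℕ, ∀ hab : a < b, ∀ hb : b ≤ q,
        beta x ⟨i + a, by omega⟩ ⟨i + b, by omega⟩ =
        beta y ⟨i' + a, by omega⟩ ⟨i' + b, by omega⟩ := by
  constructor
  · intro h a b hab hb
    have hF : ∀ k < q, Fdig x q i hi k = Fdig y q i' hi' k := by
      refine digits_eq (fun k => 2 ^ (k+1)) _ _ q (fun k _ => Fdig_lt x q i hi k)
        (fun k _ => Fdig_lt y q i' hi' k) ?_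
      rw [← phi_repr, ← phi_repr, h]
    set k := q - (a+1) with hkdef
    have hkq : k < q := by omega
    have h1 := hF k hkq
    simp only [Fdig, dif_pos hkq] at h1
    have hD : ∀ t < k+1, dig x (i + q - (k+1)) (k+1) (by omega) t
        = dig y (i' + q - (k+1)) (k+1) (by omega) t := by
      refine digits_eq (fun _ => 2) _ _ (k+1)
        (fun t _ => lt_of_le_of_lt (beta_le_one _ _ _) one_lt_two)
        (fun t _ => lt_of_le_of_lt (beta_le_one _ _ _) one_lt_two) ?_
      simp only [Finset.prod_const, Finset.card_range]
      rw [← chi_repr, ← chi_repr]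
      exact h1
    have h2 := hD (q - b) (by omega)
    unfold dig at h2
    refine (beta_congr' x _ _ _ _ _ _ _ _ ?_ ?_).trans
      (h2.trans (beta_congr' y _ _ _ _ _ _ _ _ ?_ ?_)) <;> omega
  · intro h
    rw [phi_repr, phi_repr]
    refine Finset.sum_congr rfl fun k hk => ?_
    rw [mem_range] at hk
    refine congrArg (· * ∏ j ∈ range k, (2:ℕ) ^ (j+1)) ?_
    simp only [Fdig, dif_pos hk]
    rw [chi_repr, chi_repr]
    refine Finset.sum_congr rfl fun t ht => ?_
    rw [mem_range] at ht
    refine congrArg (· * (2:ℕ) ^ t) ?_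
    unfold dig
    have hb := h (q - (k+1)) (q - t) (by omega) (by omega)
    refine (beta_congr' x _ _ _ _ _ _ _ _ ?_ ?_).trans
      (hb.trans (beta_congr' y _ _ _ _ _ _ _ _ ?_ ?_)) <;> omega
end
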